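/- arXiv:1705.07549 — 7 statements merged into one kernel-verified Lean document; each statement's English description precedes it below -/
import Mathlib

section
/- Every linear automorphism of ℙ² (over a field of characteristic ≠ 2, 3) preserving the cuspidal cubic C : x₀x₂² = x₁³ and fixing the cusp (1:0:0) is of the form (x₀, x₁, x₂) ↦ (x₀, λ²x₁, λ³x₂) for some nonzero scalar λ. -/
open Polynomial

theorem coeffs6 {R : Type*} [CommRing R] (A5 A4 A3 A2 A1 A0 : R)
    (h : C A5 * X ^ 5 + C A4 * X ^ 4 + C A3 * X ^ 3 + C A2 * X ^ 2 + C A1 * X + C A0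
        = (0 : R[X])) :
    A5 = 0 ∧ A4 = 0 ∧ A3 = 0 ∧ A2 = 0 ∧ A1 = 0 ∧ A0 = 0 := by
  refine ⟨?_, ?_, ?_, ?_, ?_, ?_⟩ <;>
  [ have := congrArg (fun p => Polynomial.coeff p 5) h;
    have := congrArg (fun p => Polynomial.coeff p 4) h;
    have := congrArg (fun p => Polynomial.coeff p 3) h;
    have := congrArg (fun p => Polynomial.coeff p 2) h;
    have := congrArg (fun p => Polynomial.coeff p 1) h;
    have := congrArg (fun p => Polynomial.coeff p 0) h ] <;>
  simpa [coeff_add, coeff_C_mul, coeff_X_pow, coeff_C, coeff_X] using this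

/-- Every linear automorphism of ℙ² (given by an invertible matrix g, up to scalar)
preserving the cuspidal cubic C : x₀x₂² = x₁³ and fixing the cusp (1:0:0) is,
up to a nonzero scalar, of the form (x₀, x₁, x₂) ↦ (x₀, λ²x₁, λ³x₂) for some λ ≠ 0. -/
theorem stmt5 {k : Type*} [Field k] [IsAlgClosed k]
    (h2 : (2 : k) ≠ 0) (h3 : (3 : k) ≠ 0)
    (g : Matrix (Fin 3) (Fin 3) k) (hg : IsUnit g)
    (hC : (fun v => g.mulVec v) '' {v : Fin 3 → k | v ≠ 0 ∧ v 0 * (v 2) ^ 2 = (v 1) ^ 3}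
        = {v : Fin 3 → k | v ≠ 0 ∧ v 0 * (v 2) ^ 2 = (v 1) ^ 3})
    (hcusp : ∃ c : k, c ≠ 0 ∧ g.mulVec ![1, 0, 0] = c • ![1, 0, 0]) :
    ∃ lam c : k, lam ≠ 0 ∧ c ≠ 0 ∧
      g = c • Matrix.diagonal ![1, lam ^ 2, lam ^ 3] := by
  obtain ⟨c, hc0, hcv⟩ := hcusp
  have col : ∀ i, g i 0 = c * (![1, 0, 0] : Fin 3 → k) i := by
    intro i
    have := congrFun hcv i
    simpa [Matrix.mulVec, dotProduct, Fin.sum_univ_three] using this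
  have g00 : g 0 0 = c := by simpa using col 0
  have g10 : g 1 0 = 0 := by simpa using col 1
  have g20 : g 2 0 = 0 := by simpa using col 2
  set a := g 0 1 with ha
  set d0 := g 0 2 with hd0
  set b1 := g 1 1 with hb1
  set d1 := g 1 2 with hd1
  set b2 := g 2 1 with hb2
  set d2 := g 2 2 with hd2
  -- key identity from invariance
  have key : ∀ s : k, (c * s ^ 3 + a * s + d0) * (b2 * s + d2) ^ 2
      = (b1 * s + d1) ^ 3 := by
    intro s
    have hv : (![s ^ 3, s, 1] : Fin 3 → k) ∈
        {v : Fin 3 → k | v ≠ 0 ∧ v 0 * (v 2) ^ 2 = (v 1) ^ 3} := by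
      constructor
      · intro h
        have := congrFun h 2
        simp at this
      · simp
    have hmem := Set.mem_image_of_mem (fun v => g.mulVec v) hv
    rw [hC] at hmem
    obtain ⟨-, heq⟩ := hmem
    have e0 : g.mulVec ![s ^ 3, s, 1] 0 = c * s ^ 3 + a * s + d0 := by
      simp [Matrix.mulVec, dotProduct, Fin.sum_univ_three, g00, ha, hd0]
    have e1 : g.mulVec ![s ^ 3, s, 1] 1 = b1 * s + d1 := by
      simp [Matrix.mulVec, dotProduct, Fin.sum_univ_three, g10, hb1, hd1]
    have e2 : g.mulVec ![s ^ 3, s, 1] 2 = b2 * s + d2 := by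
      simp [Matrix.mulVec, dotProduct, Fin.sum_univ_three, g20, hb2, hd2]
    simpa only [e0, e1, e2] using heq
  -- polynomial identity
  have hq0 : C (c * b2 ^ 2) * X ^ 5 + C (2 * c * b2 * d2) * X ^ 4
      + C (c * d2 ^ 2 + a * b2 ^ 2 - b1 ^ 3) * X ^ 3
      + C (2 * a * b2 * d2 + d0 * b2 ^ 2 - 3 * b1 ^ 2 * d1) * X ^ 2
      + C (a * d2 ^ 2 + 2 * d0 * b2 * d2 - 3 * b1 * d1 ^ 2) * X
      + C (d0 * d2 ^ 2 - d1 ^ 3) = (0 : k[X]) := by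
    apply Polynomial.funext
    intro s
    simp only [eval_add, eval_mul, eval_pow, eval_C, eval_X, eval_zero]
    linear_combination key s
  obtain ⟨h5, h4, h3', h2', h1', h0'⟩ := coeffs6 _ _ _ _ _ _ hq0
  -- b2 = 0
  have hb2z : b2 = 0 := by
    have : b2 ^ 2 = 0 := by
      rcases mul_eq_zero.mp h5 with h | h
      · exact absurd h hc0
      · exact h
    exact pow_eq_zero_iff (n := 2) (by norm_num) |>.mp this
  -- determinant
  have hdet : g.det ≠ 0 := ((Matrix.isUnit_iff_isUnit_det g).mp hg).ne_zero
  have hdet3 : g.det = c * (b1 * d2 - d1 * b2) := by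
    rw [Matrix.det_fin_three]
    rw [← ha, ← hd0, ← hb1, ← hd1, ← hb2, ← hd2] at *
    rw [g00, g10, g20]; ring
  have hb1d2 : b1 * d2 ≠ 0 := by
    intro h
    apply hdet
    rw [hdet3, hb2z, h]; ring
  have hb1n : b1 ≠ 0 := fun h => hb1d2 (by rw [h]; ring)
  have hd2n : d2 ≠ 0 := fun h => hb1d2 (by rw [h]; ring)
  -- d1 = 0
  have hd1z : d1 = 0 := by
    have h30 : 3 * b1 ^ 2 * d1 = 0 := by
      rw [hb2z] at h2'; linear_combination -h2'
    rcases mul_eq_zero.mp h30 with h | h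
    · rcases mul_eq_zero.mp h with h' | h'
      · exact absurd h' h3
      · exact absurd (pow_eq_zero_iff (n := 2) (by norm_num) |>.mp h') hb1n
    · exact h
  -- a = 0
  have haz : a = 0 := by
    have : a * d2 ^ 2 = 0 := by rw [hb2z, hd1z] at h1'; linear_combination h1'
    rcases mul_eq_zero.mp this with h | h
    · exact h
    · exact absurd (pow_eq_zero_iff (n := 2) (by norm_num) |>.mp h) hd2n
  -- d0 = 0
  have hd0z : d0 = 0 := by
    have : d0 * d2 ^ 2 = 0 := by rw [hd1z] at h0'; linear_combination h0'
    rcases mul_eq_zero.mp this with h | h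
    · exact h
    · exact absurd (pow_eq_zero_iff (n := 2) (by norm_num) |>.mp h) hd2n
  -- the cubic relation
  have hrel : c * d2 ^ 2 = b1 ^ 3 := by
    rw [hb2z] at h3'; linear_combination h3'
  have hb1eq : c * (d2 / b1) ^ 2 = b1 := by
    field_simp
    linear_combination hrel
  have hd2eq : c * (d2 / b1) ^ 3 = d2 := by
    field_simp
    linear_combination hrel
  refine ⟨d2 / b1, c, div_ne_zero hd2n hb1n, hc0, ?_⟩
  ext i j
  fin_cases i <;> fin_cases j <;>
    simp [Matrix.diagonal, g00, g10, g20, ← ha, ← hd0, ← hb1, ← hd1, ← hb2, ← hd2,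
      haz, hd0z, hd1z, hb2z, hb1eq, hd2eq]
end

section
/- Let k be algebraically closed with char k ≠ 2, 3, let g_a = Diag(a, 1, 1/a) ∈ PGL(3, k) for a ∈ k^×, and let z₅ = (V(x₀(x₀x₂ + x₁(x₁ + x₂))), V(x₂)). Then g_a · z₅ = (V(x₀(x₀x₂ + x₁(x₁ + a x₂))), V(x₂)), and as a → 0 this family converges (in the parameter space of (cubic, line) pairs ℙ(S³V) × ℙ(V)) to z₇ = (V(x₀(x₀x₂ + x₁²)), V(x₂)). -/
open MvPolynomial

/-- With g_a = Diag(a, 1, 1/a) acting on pairs (cubic, line) by F ↦ F ∘ g_a⁻¹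
(so the substitution x₀ ↦ a⁻¹x₀, x₁ ↦ x₁, x₂ ↦ a x₂), one has, up to nonzero
scalars, g_a · z₅ = (V(x₀(x₀x₂ + x₁(x₁ + a x₂))), V(x₂)) for all a ≠ 0, and
the family a ↦ x₀(x₀x₂ + x₁(x₁ + a x₂)) evaluated at a = 0 is the cubic
x₀(x₀x₂ + x₁²) of z₇; i.e. g_a · z₅ → z₇ as a → 0 in ℙ(S³V) × ℙ(V). -/
theorem stmt7 {k : Type*} [Field k] [IsAlgClosed k]
    (h2 : (2 : k) ≠ 0) (h3 : (3 : k) ≠ 0) :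
    (∀ a : k, a ≠ 0 →
      ∃ c d : k, c ≠ 0 ∧ d ≠ 0 ∧
        aeval (R := k) (![C a⁻¹ * X 0, X 1, C a * X 2] : Fin 3 → MvPolynomial (Fin 3) k)
            (X 0 * (X 0 * X 2 + X 1 * (X 1 + X 2)))
          = c • (X 0 * (X 0 * X 2 + X 1 * (X 1 + C a * X 2))) ∧
        aeval (R := k) (![C a⁻¹ * X 0, X 1, C a * X 2] : Fin 3 → MvPolynomial (Fin 3) k)
            (X 2 : MvPolynomial (Fin 3) k)
          = d • (X 2 : MvPolynomial (Fin 3) k)) ∧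
    (fun a : k => X 0 * (X 0 * X 2 + X 1 * (X 1 + C a * X 2)) : k → MvPolynomial (Fin 3) k) 0
      = X 0 * (X 0 * X 2 + X 1 ^ 2) := by
  constructor
  · intro a ha
    refine ⟨a⁻¹, a, inv_ne_zero ha, ha, ?_, ?_⟩
    · have h : (C a⁻¹ : MvPolynomial (Fin 3) k) * C a = 1 := by
        rw [← C_mul, inv_mul_cancel₀ ha, C_1]
      simp only [map_mul, map_add, aeval_X, Matrix.cons_val_zero, Matrix.cons_val_one,
        Matrix.head_cons, Matrix.cons_val_two, Matrix.tail_cons, smul_eq_C_mul]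
      linear_combination (X 0 ^ 2 * X 2 * C a⁻¹ : MvPolynomial (Fin 3) k) * h
    · simp [smul_eq_C_mul]
  · simp only
    rw [C_0]
    ring
end

section
/- Let k be algebraically closed with char k ≠ 2, 3, let h_a = Diag(1, 1/a, 1/a²) ∈ PGL(3, k) for a ∈ k^×, and let z₁₁ = (V(x₀²x₂ + x₁²(x₀ + x₁)), V(x₂)). Then h_a · z₁₁ = (V(x₀²x₂ + x₁²(x₀ + a x₁)), V(x₂)), and as a → 0 this family converges in ℙ(S³V) × ℙ(V) to z₇ = (V(x₀(x₀x₂ + x₁²)), V(x₂)). -/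
open MvPolynomial

/-- With h_a = Diag(1, 1/a, 1/a²) acting on pairs (cubic, line) by F ↦ F ∘ h_a⁻¹
(so the substitution x₀ ↦ x₀, x₁ ↦ a x₁, x₂ ↦ a² x₂), one has, up to nonzero
scalars, h_a · z₁₁ = (V(x₀²x₂ + x₁²(x₀ + a x₁)), V(x₂)) for all a ≠ 0, and the
family a ↦ x₀²x₂ + x₁²(x₀ + a x₁) evaluated at a = 0 is the cubic x₀(x₀x₂ + x₁²)
of z₇; i.e. h_a · z₁₁ → z₇ as a → 0 in ℙ(S³V) × ℙ(V). -/
theorem stmt8 {k : Type*} [Field k] [IsAlgClosed k]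
    (h2 : (2 : k) ≠ 0) (h3 : (3 : k) ≠ 0) :
    (∀ a : k, a ≠ 0 →
      ∃ c d : k, c ≠ 0 ∧ d ≠ 0 ∧
        aeval (R := k) (![X 0, C a * X 1, C (a ^ 2) * X 2] : Fin 3 → MvPolynomial (Fin 3) k)
            (X 0 ^ 2 * X 2 + X 1 ^ 2 * (X 0 + X 1))
          = c • (X 0 ^ 2 * X 2 + X 1 ^ 2 * (X 0 + C a * X 1)) ∧
        aeval (R := k) (![X 0, C a * X 1, C (a ^ 2) * X 2] : Fin 3 → MvPolynomial (Fin 3) k)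
            (X 2 : MvPolynomial (Fin 3) k)
          = d • (X 2 : MvPolynomial (Fin 3) k)) ∧
    (fun a : k => X 0 ^ 2 * X 2 + X 1 ^ 2 * (X 0 + C a * X 1) : k → MvPolynomial (Fin 3) k) 0
      = X 0 * (X 0 * X 2 + X 1 ^ 2) := by
  constructor
  · intro a ha
    refine ⟨a ^ 2, a ^ 2, pow_ne_zero _ ha, pow_ne_zero _ ha, ?_, ?_⟩ <;>
      simp [smul_eq_C_mul, C_pow] <;> ring
  · simp [smul_eq_C_mul]
    ring
end

section
/- Let k be algebraically closed with char k ≠ 2, 3. Every pair (C, L) with C an irreducible cuspidal plane cubic and L a line that is 2-tangent to C at a smooth point (tangent but not triply tangent, and avoiding the cusp) is PGL(3)-equivalent to (V(x₀²x₂ + x₁²(x₀ + x₁)), V(x₂)). -/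
open MvPolynomial

namespace Stmt10Aux

variable {k : Type*} [CommRing k]

lemma subst_comp (A B : Matrix (Fin 3) (Fin 3) k) (P : MvPolynomial (Fin 3) k) :
    aeval (fun i => ∑ j, C (B i j) * X j) (aeval (fun i => ∑ j, C (A i j) * X j) P)
      = aeval (fun i => ∑ j, C ((A * B) i j) * X j) P := by
  simp only [aeval_eq_bind₁]
  rw [bind₁_bind₁]
  have : (fun i => bind₁ (fun i => ∑ j, C (B i j) * X j) (∑ j, C (A i j) * X j))
      = (fun i => (∑ j, C ((A * B) i j) * X j : MvPolynomial (Fin 3) k)) := by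
    funext i
    simp only [Fin.sum_univ_three, map_add, map_mul, bind₁_X_right, bind₁_C_right,
      Matrix.mul_apply, Fin.sum_univ_three]
    ring
  rw [this]

lemma eval_subst (A : Matrix (Fin 3) (Fin 3) k) (v : Fin 3 → k) (P : MvPolynomial (Fin 3) k) :
    eval v (aeval (fun i => ∑ j, C (A i j) * X j) P) = eval (A.mulVec v) P := by
  simp only [aeval_eq_bind₁]
  induction P using MvPolynomial.induction_on with
  | C a => simp
  | add p q hp hq => simp [hp, hq]
  | mul_X p n hp =>
      simp only [map_mul, bind₁_X_right, hp]
      congr 1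
      simp [Matrix.mulVec, dotProduct, Fin.sum_univ_three]

lemma pderiv_subst (A : Matrix (Fin 3) (Fin 3) k) (i : Fin 3) (P : MvPolynomial (Fin 3) k) :
    pderiv i (aeval (fun i => ∑ j, C (A i j) * X j) P)
      = ∑ j, aeval (fun i => ∑ j, C (A i j) * X j) (pderiv j P) * C (A j i) := by
  simp only [aeval_eq_bind₁]
  induction P using MvPolynomial.induction_on with
  | C a => simp
  | add p q hp hq => simp [hp, hq, Finset.sum_add_distrib, add_mul]
  | mul_X p n hp =>
      have hXn : pderiv i ((fun i => ∑ j, C (A i j) * X j) n : MvPolynomial (Fin 3) k)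
          = C (A n i) := by
        fin_cases i <;> simp [Fin.sum_univ_three, pderiv_X]
      have hsumX : (∑ j, bind₁ (fun i => ∑ j, C (A i j) * X j)
            ((pderiv j) (X n : MvPolynomial (Fin 3) k)) * C (A j i)) = C (A n i) := by
        fin_cases n <;> simp [Fin.sum_univ_three, Pi.single_apply]
      have hd : ∀ j : Fin 3, (pderiv j) (p * X n) = pderiv j p * X n + p * pderiv j (X n) :=
        fun j => pderiv_mul
      calc pderiv i (bind₁ (fun i => ∑ j, C (A i j) * X j) (p * X n))
          = pderiv i (bind₁ (fun i => ∑ j, C (A i j) * X j) p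
              * (fun i => ∑ j, C (A i j) * X j) n) := by rw [map_mul, bind₁_X_right]
        _ = (∑ j, bind₁ (fun i => ∑ j, C (A i j) * X j) (pderiv j p) * C (A j i))
              * (fun i => ∑ j, C (A i j) * X j) n
            + bind₁ (fun i => ∑ j, C (A i j) * X j) p * C (A n i) := by
            rw [pderiv_mul, hp, hXn]
        _ = ∑ j, bind₁ (fun i => ∑ j, C (A i j) * X j) (pderiv j (p * X n)) * C (A j i) := by
            simp only [hd, map_add, map_mul, bind₁_X_right, add_mul, Finset.sum_add_distrib]
            congr 1
            · rw [Finset.sum_mul]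
              exact Finset.sum_congr rfl fun j _ => by ring
            · rw [← hsumX, Finset.mul_sum]
              exact Finset.sum_congr rfl fun j _ => by ring

lemma subst_line (A : Matrix (Fin 3) (Fin 3) k) (v : Fin 3 → k) :
    aeval (fun i => ∑ j, C (A i j) * X j) (∑ j, C (v j) * X j)
      = ∑ i, C (Matrix.vecMul v A i) * X i := by
  simp only [Fin.sum_univ_three, map_add, map_mul, aeval_X, aeval_C, algebraMap_eq,
    Matrix.vecMul, dotProduct, map_add, map_mul]
  ring

end Stmt10Aux

open Stmt10Aux

set_option maxHeartbeats 1600000 in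
/-- Normal form for 2-tangent pairs: every pair (C, L), where C = V(F) is an
irreducible cuspidal plane cubic (i.e. PGL(3)-equivalent to V(x₀²x₂ + x₁³)) and
L = V(∑ bⱼxⱼ) is a line which is tangent to C at a smooth point p but not triply
tangent (the intersection C ∩ L contains a second point) and which avoids the
singular (cusp) points of C, is PGL(3)-equivalent, up to nonzero scalars on the
defining equations, to the pair (V(x₀²x₂ + x₁²(x₀ + x₁)), V(x₂)). -/
theorem stmt10 {k : Type*} [Field k] [IsAlgClosed k]
    (h2 : (2 : k) ≠ 0) (h3 : (3 : k) ≠ 0)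
    (F : MvPolynomial (Fin 3) k) (b : Fin 3 → k) (hb : b ≠ 0)
    -- C is an irreducible cuspidal cubic: PGL(3)-equivalent to V(x₀²x₂ + x₁³)
    (hcusp : ∃ (h : Matrix (Fin 3) (Fin 3) k) (c : k), IsUnit h ∧ c ≠ 0 ∧
      aeval (R := k) (fun i => ∑ j, C (h i j) * X j) F
        = c • (X 0 ^ 2 * X 2 + X 1 ^ 3 : MvPolynomial (Fin 3) k))
    -- L avoids the singular points of C
    (havoid : ∀ v : Fin 3 → k, v ≠ 0 → (∀ i, eval v (pderiv i F) = 0) → ∑ i, b i * v i ≠ 0)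
    -- L is tangent to C at a smooth point p, but not triply tangent
    (p : Fin 3 → k) (hp0 : p ≠ 0) (hpC : eval p F = 0) (hpL : ∑ i, b i * p i = 0)
    (hsm : (fun i => eval p (pderiv i F)) ≠ 0)
    (htan : ∃ c : k, c ≠ 0 ∧ (fun i => eval p (pderiv i F)) = c • b)
    (hnot3 : ∃ q : Fin 3 → k, q ≠ 0 ∧ eval q F = 0 ∧ ∑ i, b i * q i = 0 ∧
      ∀ c : k, q ≠ c • p) :
    ∃ g : Matrix (Fin 3) (Fin 3) k, IsUnit g ∧ ∃ c d : k, c ≠ 0 ∧ d ≠ 0 ∧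
      aeval (R := k) (fun i => ∑ j, C (g i j) * X j) F
        = c • (X 0 ^ 2 * X 2 + X 1 ^ 2 * (X 0 + X 1) : MvPolynomial (Fin 3) k) ∧
      aeval (R := k) (fun i => ∑ j, C (g i j) * X j) (∑ j, C (b j) * X j)
        = d • (X 2 : MvPolynomial (Fin 3) k) := by
  obtain ⟨h, c, hhU, hc, hFG⟩ := hcusp
  obtain ⟨c₁, hc₁, hwdef⟩ := htan
  have hw : ∀ j, eval p (pderiv j F) = c₁ * b j := fun j => by
    have := congrFun hwdef j; simpa using this
  have hdet : IsUnit h.det := (Matrix.isUnit_iff_isUnit_det h).mp hhU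
  have hhinv : h * h⁻¹ = 1 := Matrix.mul_nonsing_inv h hdet
  set p' : Fin 3 → k := (h⁻¹).mulVec p with hp'def
  have hpp' : h.mulVec p' = p := by
    rw [hp'def, Matrix.mulVec_mulVec, hhinv, Matrix.one_mulVec]
  set b' : Fin 3 → k := Matrix.vecMul b h with hb'def
  have hb'i : ∀ i, b' i = ∑ j, b j * h j i := fun i => by
    simp [hb'def, Matrix.vecMul, dotProduct]
  have hb'ne : b' ≠ 0 := by
    intro h0
    apply hb
    have : Matrix.vecMul b' h⁻¹ = b := by
      rw [hb'def, Matrix.vecMul_vecMul, hhinv, Matrix.vecMul_one]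
    rw [← this, h0, Matrix.zero_vecMul]
  -- the curve equation at p'
  have hGp' : p' 0 ^ 2 * p' 2 + p' 1 ^ 3 = 0 := by
    have h1 : eval p' (aeval (R := k) (fun i => ∑ j, C (h i j) * X j) F) = eval p F := by
      rw [eval_subst, hpp']
    rw [hFG, hpC, smul_eq_C_mul] at h1
    simp at h1
    rcases h1 with h1 | h1
    · exact absurd h1 hc
    · exact h1
  -- the gradient equations
  have key : ∀ i, c * eval p' (pderiv i (X 0 ^ 2 * X 2 + X 1 ^ 3 : MvPolynomial (Fin 3) k))
      = c₁ * b' i := by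
    intro i
    have h1 := congrArg (eval p') (pderiv_subst h i F)
    rw [hFG] at h1
    have hL : eval p' (pderiv i (c • (X 0 ^ 2 * X 2 + X 1 ^ 3 : MvPolynomial (Fin 3) k)))
        = c * eval p' (pderiv i (X 0 ^ 2 * X 2 + X 1 ^ 3 : MvPolynomial (Fin 3) k)) := by
      rw [smul_eq_C_mul, pderiv_C_mul, map_mul, eval_C]
    have hR : eval p' (∑ j, aeval (R := k) (fun i => ∑ j, C (h i j) * X j) (pderiv j F)
          * C (h j i)) = ∑ j, c₁ * b j * h j i := by
      rw [map_sum]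
      refine Finset.sum_congr rfl fun j _ => ?_
      rw [map_mul, eval_C, eval_subst, hpp', hw j]
    rw [hL, hR] at h1
    rw [h1, hb'i i, Finset.mul_sum]
    exact Finset.sum_congr rfl fun j _ => by ring
  have e0 : eval p' (pderiv (0 : Fin 3) (X 0 ^ 2 * X 2 + X 1 ^ 3 : MvPolynomial (Fin 3) k))
      = 2 * p' 0 * p' 2 := by
    simp [pderiv_mul, pderiv_pow, Pi.single_apply]
    ring
  have e1 : eval p' (pderiv (1 : Fin 3) (X 0 ^ 2 * X 2 + X 1 ^ 3 : MvPolynomial (Fin 3) k))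
      = 3 * p' 1 ^ 2 := by
    simp [pderiv_mul, pderiv_pow, Pi.single_apply]
  have e2 : eval p' (pderiv (2 : Fin 3) (X 0 ^ 2 * X 2 + X 1 ^ 3 : MvPolynomial (Fin 3) k))
      = p' 0 ^ 2 := by
    simp [pderiv_mul, pderiv_pow, Pi.single_apply]
  have E0 : c * (2 * p' 0 * p' 2) = c₁ * b' 0 := by rw [← e0]; exact key 0
  have E1 : c * (3 * p' 1 ^ 2) = c₁ * b' 1 := by rw [← e1]; exact key 1
  have E2 : c * p' 0 ^ 2 = c₁ * b' 2 := by rw [← e2]; exact key 2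
  have hp'0 : p' 0 ≠ 0 := by
    intro h0
    have hp'1 : p' 1 = 0 := by
      have h1 : p' 1 ^ 3 = 0 := by rw [h0] at hGp'; simpa using hGp'
      exact pow_eq_zero_iff (three_ne_zero) |>.mp h1
    apply hb'ne
    funext i
    fin_cases i
    · have := E0; rw [h0] at this; simp at this
      exact this.resolve_left hc₁
    · have := E1; rw [hp'1] at this; simp at this
      exact this.resolve_left hc₁
    · have := E2; rw [h0] at this; simp at this
      exact this.resolve_left hc₁
  set t : k := p' 1 / p' 0 with htdef
  have hp1t : p' 1 = t * p' 0 := by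
    rw [htdef, div_mul_cancel₀ _ hp'0]
  have hp2t : p' 2 = -(t ^ 3) * p' 0 := by
    have h1 : p' 0 ^ 2 * p' 2 = p' 0 ^ 2 * (-(t ^ 3) * p' 0) := by
      rw [hp1t] at hGp'
      linear_combination hGp'
    exact mul_left_cancel₀ (pow_ne_zero 2 hp'0) h1
  set μ : k := c * p' 0 ^ 2 / c₁ with hμdef
  have hμ : c₁ * μ = c * p' 0 ^ 2 := by
    rw [hμdef]; field_simp
  have hμne : μ ≠ 0 := div_ne_zero (mul_ne_zero hc (pow_ne_zero 2 hp'0)) hc₁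
  have hb'2 : b' 2 = μ := mul_left_cancel₀ hc₁ (by rw [hμ]; exact E2.symm)
  have hb'0 : b' 0 = -(2 * t ^ 3) * μ := by
    refine mul_left_cancel₀ hc₁ ?_
    rw [hp2t] at E0
    linear_combination -E0 + 2 * t ^ 3 * hμ
  have hb'1 : b' 1 = 3 * t ^ 2 * μ := by
    refine mul_left_cancel₀ hc₁ ?_
    rw [hp1t] at E1
    linear_combination -E1 - 3 * t ^ 2 * hμ
  -- t ≠ 0 using the second intersection point
  have ht : t ≠ 0 := by
    intro ht0
    obtain ⟨q, hq0, hqC, hqL, hqm⟩ := hnot3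
    set q' : Fin 3 → k := (h⁻¹).mulVec q with hq'def
    have hqq' : h.mulVec q' = q := by
      rw [hq'def, Matrix.mulVec_mulVec, hhinv, Matrix.one_mulVec]
    have hGq' : q' 0 ^ 2 * q' 2 + q' 1 ^ 3 = 0 := by
      have h1 : eval q' (aeval (R := k) (fun i => ∑ j, C (h i j) * X j) F) = eval q F := by
        rw [eval_subst, hqq']
      rw [hFG, hqC, smul_eq_C_mul] at h1
      simp at h1
      rcases h1 with h1 | h1
      · exact absurd h1 hc
      · exact h1
    have hq'L : b' 0 * q' 0 + b' 1 * q' 1 + b' 2 * q' 2 = 0 := by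
      have h2 : ∑ j, b j * (h.mulVec q') j = b' 0 * q' 0 + b' 1 * q' 1 + b' 2 * q' 2 := by
        simp only [Fin.sum_univ_three, Matrix.mulVec, dotProduct, hb'i]
        ring
      rw [hqq'] at h2
      rw [← h2]
      exact hqL
    rw [hb'0, hb'1, hb'2, ht0] at hq'L
    have hq'2 : q' 2 = 0 := by
      have hx : μ * q' 2 = 0 := by linear_combination hq'L
      exact (mul_eq_zero.mp hx).resolve_left hμne
    have hq'1 : q' 1 = 0 := by
      rw [hq'2] at hGq'
      have h1 : q' 1 ^ 3 = 0 := by simpa using hGq'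
      exact pow_eq_zero_iff (three_ne_zero) |>.mp h1
    have hq'0 : q' 0 ≠ 0 := by
      intro h0
      apply hq0
      rw [← hqq']
      have : q' = 0 := by funext i; fin_cases i <;> assumption
      rw [this, Matrix.mulVec_zero]
    obtain ⟨s, hs⟩ : ∃ s : k, s = q' 0 / p' 0 := ⟨_, rfl⟩
    apply hqm s
    have hq'p' : q' = s • p' := by
      funext i
      fin_cases i
      · simp [hs, div_mul_cancel₀ _ hp'0]
      · simp [hs, hq'1, hp1t, ht0]
      · simp [hs, hq'2, hp2t, ht0]
    rw [← hqq', hq'p', Matrix.mulVec_smul, hpp']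
  -- the normalizing matrix
  set m : Matrix (Fin 3) (Fin 3) k :=
    !![1, 0, 0; t, 3 * t, 0; -t ^ 3, -(9 * t ^ 3), 27 * t ^ 3] with hmdef
  have h27 : (27 : k) ≠ 0 := by
    intro hcon
    apply pow_ne_zero 3 h3
    rw [show (3 : k) ^ 3 = 27 by norm_num, hcon]
  have hdm : m.det ≠ 0 := by
    have : m.det = 81 * t ^ 4 := by
      rw [hmdef, Matrix.det_fin_three]
      simp
      ring
    rw [this]
    refine mul_ne_zero ?_ (pow_ne_zero 4 ht)
    intro hcon
    apply pow_ne_zero 4 h3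
    rw [show (3 : k) ^ 4 = 81 by norm_num, hcon]
  refine ⟨h * m, ?_, c * (27 * t ^ 3), 27 * t ^ 3 * μ,
    mul_ne_zero hc (mul_ne_zero h27 (pow_ne_zero 3 ht)),
    mul_ne_zero (mul_ne_zero h27 (pow_ne_zero 3 ht)) hμne, ?_, ?_⟩
  · rw [Matrix.isUnit_iff_isUnit_det, Matrix.det_mul]
    exact hdet.mul (isUnit_iff_ne_zero.mpr hdm)
  · -- the cubic
    rw [← subst_comp h m F, hFG, map_smul]
    have hmG : aeval (R := k) (fun i => ∑ j, C (m i j) * X j)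
        (X 0 ^ 2 * X 2 + X 1 ^ 3 : MvPolynomial (Fin 3) k)
        = (27 * t ^ 3) • (X 0 ^ 2 * X 2 + X 1 ^ 2 * (X 0 + X 1) : MvPolynomial (Fin 3) k) := by
      rw [smul_eq_C_mul]
      simp only [map_add, map_mul, map_pow, aeval_X, Fin.sum_univ_three, hmdef,
        Matrix.cons_val', Matrix.cons_val_zero, Matrix.cons_val_one, Matrix.head_cons,
        Matrix.empty_val', Matrix.cons_val_fin_one, Matrix.head_fin_const,
        Matrix.cons_val_two, Matrix.tail_cons, Matrix.of_apply,
        map_neg, map_one, map_zero, map_ofNat]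
      ring
    rw [hmG, smul_smul]
  · -- the line
    rw [subst_line]
    have hvm : Matrix.vecMul b (h * m) = Matrix.vecMul b' m := by
      rw [hb'def, Matrix.vecMul_vecMul]
    have hv0 : Matrix.vecMul b' m 0 = 0 := by
      simp only [Matrix.vecMul, dotProduct, Fin.sum_univ_three, hmdef,
        Matrix.cons_val', Matrix.cons_val_zero, Matrix.cons_val_one, Matrix.head_cons,
        Matrix.empty_val', Matrix.cons_val_fin_one, Matrix.head_fin_const,
        Matrix.cons_val_two, Matrix.tail_cons, Matrix.of_apply, hb'0, hb'1, hb'2]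
      ring
    have hv1 : Matrix.vecMul b' m 1 = 0 := by
      simp only [Matrix.vecMul, dotProduct, Fin.sum_univ_three, hmdef,
        Matrix.cons_val', Matrix.cons_val_zero, Matrix.cons_val_one, Matrix.head_cons,
        Matrix.empty_val', Matrix.cons_val_fin_one, Matrix.head_fin_const,
        Matrix.cons_val_two, Matrix.tail_cons, Matrix.of_apply, hb'0, hb'1, hb'2]
      ring
    have hv2 : Matrix.vecMul b' m 2 = 27 * t ^ 3 * μ := by
      simp only [Matrix.vecMul, dotProduct, Fin.sum_univ_three, hmdef,
        Matrix.cons_val', Matrix.cons_val_zero, Matrix.cons_val_one, Matrix.head_cons,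
        Matrix.empty_val', Matrix.cons_val_fin_one, Matrix.head_fin_const,
        Matrix.cons_val_two, Matrix.tail_cons, Matrix.of_apply, hb'0, hb'1, hb'2]
      ring
    rw [Fin.sum_univ_three, hvm, hv0, hv1, hv2, smul_eq_C_mul]
    simp
end

section
/- Let k be algebraically closed with char k ≠ 2, 3 and let C : x₀³ + x₁³ − 3x₀x₁x₂ = 0. Then the stabilizer of C in PGL(3, k) is generated by the two elements g₁ = Diag(1, ζ₃², ζ₃) and g₂ = the transposition matrix swapping x₀ and x₁ (fixing x₂), where ζ₃ is a primitive third root of unity. In particular this stabilizer is finite. -/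
open MvPolynomial

noncomputable def sig {k : Type*} [Field k] (g : Matrix (Fin 3) (Fin 3) k) :
    Fin 3 → MvPolynomial (Fin 3) k :=
  fun i => ∑ j, C (g i j) * X j

noncomputable def FF (k : Type*) [Field k] : MvPolynomial (Fin 3) k :=
  X 0 ^ 3 + X 1 ^ 3 - 3 * (X 0 * X 1 * X 2)

def Stab {k : Type*} [Field k] (g : Matrix (Fin 3) (Fin 3) k) : Prop :=
  ∃ c : k, c ≠ 0 ∧ aeval (R := k) (sig g) (FF k) = c • FF k

section lemmas
variable {k : Type*} [Field k]

lemma sig_comp (g h : Matrix (Fin 3) (Fin 3) k) (F : MvPolynomial (Fin 3) k) :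
    aeval (R := k) (sig (g * h)) F = aeval (sig h) (aeval (sig g) F) := by
  rw [← AlgHom.comp_apply, comp_aeval]
  have hfun : (fun i => aeval (R := k) (sig h) (sig g i)) = sig (g * h) := by
    funext i
    simp only [sig, map_sum, map_mul, aeval_X, aeval_C, Matrix.mul_apply, Finset.mul_sum,
      Finset.sum_mul]
    rw [Finset.sum_comm]
    congr 1; funext j; congr 1; funext l
    rw [algebraMap_eq]; ring
  rw [hfun]

lemma sig_one : sig (1 : Matrix (Fin 3) (Fin 3) k) = X := by
  funext i
  simp [sig, Matrix.one_apply]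

lemma stab_mul {g h : Matrix (Fin 3) (Fin 3) k} (hg : Stab g) (hh : Stab h) :
    Stab (g * h) := by
  obtain ⟨c, hc, hgc⟩ := hg
  obtain ⟨c', hc', hhc⟩ := hh
  refine ⟨c * c', mul_ne_zero hc hc', ?_⟩
  rw [sig_comp, hgc, map_smul, hhc, smul_smul]

lemma stab_one : Stab (1 : Matrix (Fin 3) (Fin 3) k) :=
  ⟨1, one_ne_zero, by rw [sig_one, aeval_X_left_apply, one_smul]⟩

lemma stab_smul_one {s : k} (hs : s ≠ 0) : Stab (s • (1 : Matrix (Fin 3) (Fin 3) k)) := by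
  refine ⟨s ^ 3, pow_ne_zero _ hs, ?_⟩
  have hsig : sig (s • (1 : Matrix (Fin 3) (Fin 3) k)) = fun i => C s * X i := by
    funext i
    simp only [sig, Matrix.smul_apply, Matrix.one_apply, smul_eq_mul, mul_ite, mul_one, mul_zero,
      apply_ite C, map_zero, ite_mul, zero_mul]
    rw [Finset.sum_ite_eq]
    simp
  rw [hsig]
  simp only [FF, map_add, map_sub, map_mul, map_pow, map_ofNat, aeval_X]
  rw [smul_eq_C_mul, map_pow]
  ring

lemma stab_smul {s : k} (hs : s ≠ 0) {g : Matrix (Fin 3) (Fin 3) k} (hg : Stab g) :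
    Stab (s • g) := by
  have := stab_mul (stab_smul_one hs) hg
  rwa [smul_mul_assoc, one_mul] at this

lemma stab_of_smul {s : k} (hs : s ≠ 0) {g : Matrix (Fin 3) (Fin 3) k}
    (hg : Stab (s • g)) : Stab g := by
  have := stab_smul (inv_ne_zero hs) hg
  rwa [smul_smul, inv_mul_cancel₀ hs, one_smul] at this

lemma stab_g1 {ζ : k} (hζ3 : ζ ^ 3 = 1) : Stab (Matrix.diagonal ![1, ζ ^ 2, ζ]) := by
  refine ⟨1, one_ne_zero, ?_⟩
  have hsig : ∀ i, sig (Matrix.diagonal ![1, ζ ^ 2, ζ]) i = C (![1, ζ ^ 2, ζ] i) * X i := by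
    intro i
    simp only [sig, Matrix.diagonal_apply, apply_ite C, map_zero, ite_mul, zero_mul]
    rw [Finset.sum_ite_eq]
    simp
  simp only [FF, map_add, map_sub, map_mul, map_pow, map_ofNat, aeval_X, hsig]
  have hC : (C ζ : MvPolynomial (Fin 3) k) ^ 3 = 1 := by
    rw [← map_pow, hζ3, map_one]
  simp only [Matrix.cons_val_zero, Matrix.cons_val_one, Matrix.head_cons, map_one, one_mul,
    Matrix.cons_val_two, Matrix.tail_cons, one_smul, map_pow]
  linear_combination (X 1 ^ 3 * (C ζ ^ 3 + 1) - 3 * (X 0 * X 1 * X 2)) * hC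

lemma stab_g2 : Stab (!![0,1,0;1,0,0;0,0,1] : Matrix (Fin 3) (Fin 3) k) := by
  refine ⟨1, one_ne_zero, ?_⟩
  simp only [FF, map_add, map_sub, map_mul, map_pow, map_ofNat, aeval_X, sig,
    Fin.sum_univ_three]
  norm_num [Matrix.cons_val_zero, Matrix.cons_val_one, Matrix.head_cons,
    Matrix.cons_val_two, Matrix.tail_cons, Matrix.vecHead, Matrix.vecTail]
  ring

lemma to_eval {g : Matrix (Fin 3) (Fin 3) k} {c : k}
    (h : aeval (R := k) (sig g) (FF k) = c • FF k) :
    ∀ x y z : k,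
      (g 0 0*x + g 0 1*y + g 0 2*z)^3 + (g 1 0*x + g 1 1*y + g 1 2*z)^3
        - 3*((g 0 0*x + g 0 1*y + g 0 2*z)*(g 1 0*x + g 1 1*y + g 1 2*z)*(g 2 0*x + g 2 1*y + g 2 2*z))
      = c*(x^3+y^3-3*(x*y*z)) := by
  intro x y z
  have h' := congrArg (eval (![x, y, z])) h
  simp only [FF, sig, map_add, map_sub, map_mul, map_pow, map_ofNat, map_sum, aeval_X, eval_X,
    eval_C, smul_eval, Fin.sum_univ_three, Matrix.cons_val_zero, Matrix.cons_val_one,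
    Matrix.head_cons, Matrix.cons_val_two, Matrix.tail_cons] at h'
  linear_combination h'

lemma D_one : Matrix.diagonal ![(1:k),1,1^2] = (1 : Matrix (Fin 3) (Fin 3) k) := by
  have hv : ![(1:k),1,1^2] = (fun _ => (1:k)) := by funext i; fin_cases i <;> simp
  rw [hv]
  exact Matrix.diagonal_one

lemma D_zeta {ζ : k} (hζ3 : ζ ^ 3 = 1) : Matrix.diagonal ![(1:k),ζ,ζ^2]
    = Matrix.diagonal ![(1:k), ζ^2, ζ] * Matrix.diagonal ![(1:k), ζ^2, ζ] := by
  rw [Matrix.diagonal_mul_diagonal]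
  have hv : ![(1:k),ζ,ζ^2] = (fun i => ![(1:k), ζ^2, ζ] i * ![(1:k), ζ^2, ζ] i) := by
    funext i
    fin_cases i <;> simp <;> first | ring1 | linear_combination ζ * hζ3 | linear_combination (-ζ) * hζ3
  rw [hv]

lemma D_zetasq {ζ : k} (hζ3 : ζ ^ 3 = 1) :
    Matrix.diagonal ![(1:k),ζ^2,(ζ^2)^2] = Matrix.diagonal ![(1:k), ζ^2, ζ] := by
  have hv : ![(1:k),ζ^2,(ζ^2)^2] = ![(1:k), ζ^2, ζ] := by
    funext i
    fin_cases i <;> simp <;> first | ring1 | linear_combination ζ * hζ3 | linear_combination (-ζ) * hζ3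
  rw [hv]

lemma g2D (ω : k) : (!![0,1,0;1,0,0;0,0,1] : Matrix (Fin 3) (Fin 3) k)
    * Matrix.diagonal ![(1:k),ω,ω^2] = !![0,ω,0;1,0,0;0,0,ω^2] := by
  have hD : Matrix.diagonal ![(1:k),ω,ω^2] = !![(1:k),0,0;0,ω,0;0,0,ω^2] := by
    ext i j
    fin_cases i <;> fin_cases j <;> simp [Matrix.diagonal_apply, Matrix.vecHead, Matrix.vecTail]
  rw [hD, Matrix.mul_fin_three]
  norm_num

lemma classify_core (h2 : (2:k) ≠ 0) (h3 : (3:k) ≠ 0)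
    (a b m d e f p q r c : k)
    (hD : a*(e*r-f*q) - b*(d*r-f*p) + m*(d*q-e*p) ≠ 0)
    (hP : ∀ x y z : k,
      (a*x+b*y+m*z)^3 + (d*x+e*y+f*z)^3
        - 3*((a*x+b*y+m*z)*(d*x+e*y+f*z)*(p*x+q*y+r*z))
      = c*(x^3+y^3-3*(x*y*z))) :
    ∃ s ω : k, s ≠ 0 ∧ ω^3 = 1 ∧
      ((a=s ∧ b=0 ∧ m=0 ∧ d=0 ∧ e=s*ω ∧ f=0 ∧ p=0 ∧ q=0 ∧ r=s*ω^2) ∨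
       (a=0 ∧ b=s*ω ∧ m=0 ∧ d=s ∧ e=0 ∧ f=0 ∧ p=0 ∧ q=0 ∧ r=s*ω^2)) := by
  have h6 : (6:k) ≠ 0 := by
    have h62 : (6:k) = 2*3 := by norm_num
    rw [h62]; exact mul_ne_zero h2 h3
  have hx3 : a^3 + d^3 - 3*(a*d*p) - c = 0 := by linear_combination hP 1 0 0
  have hy3 : b^3 + e^3 - 3*(b*e*q) - c = 0 := by linear_combination hP 0 1 0
  have hz3 : m^3 + f^3 - 3*(m*f*r) = 0 := by linear_combination hP 0 0 1
  have Txz2 : a*m^2 + d*f^2 - m*f*p - m*d*r - a*f*r = 0 := by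
    have h' : (6:k) * (a*m^2 + d*f^2 - m*f*p - m*d*r - a*f*r) = 0 := by
      linear_combination hP 1 0 1 + hP 1 0 (-1) - 2 * hP 1 0 0
    exact (mul_eq_zero.mp h').resolve_left h6
  have Tx2z : a^2*m + d^2*f - m*d*p - a*f*p - a*d*r = 0 := by
    have h' : (6:k) * (a^2*m + d^2*f - m*d*p - a*f*p - a*d*r) = 0 := by
      linear_combination hP 1 0 1 - hP 1 0 (-1) - 2 * hP 0 0 1
    exact (mul_eq_zero.mp h').resolve_left h6
  have Tyz2 : b*m^2 + e*f^2 - m*f*q - m*e*r - b*f*r = 0 := by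
    have h' : (6:k) * (b*m^2 + e*f^2 - m*f*q - m*e*r - b*f*r) = 0 := by
      linear_combination hP 0 1 1 + hP 0 1 (-1) - 2 * hP 0 1 0
    exact (mul_eq_zero.mp h').resolve_left h6
  have Ty2z : b^2*m + e^2*f - m*e*q - b*f*q - b*e*r = 0 := by
    have h' : (6:k) * (b^2*m + e^2*f - m*e*q - b*f*q - b*e*r) = 0 := by
      linear_combination hP 0 1 1 - hP 0 1 (-1) - 2 * hP 0 0 1
    exact (mul_eq_zero.mp h').resolve_left h6
  have Tx2y : a^2*b + d^2*e - b*d*p - a*e*p - a*d*q = 0 := by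
    have h' : (6:k) * (a^2*b + d^2*e - b*d*p - a*e*p - a*d*q) = 0 := by
      linear_combination hP 1 1 0 - hP 1 (-1) 0 - 2 * hP 0 1 0
    exact (mul_eq_zero.mp h').resolve_left h6
  have Txy2 : a*b^2 + d*e^2 - b*e*p - b*d*q - a*e*q = 0 := by
    have h' : (6:k) * (a*b^2 + d*e^2 - b*e*p - b*d*q - a*e*q) = 0 := by
      linear_combination hP 1 1 0 + hP 1 (-1) 0 - 2 * hP 1 0 0
    exact (mul_eq_zero.mp h').resolve_left h6
  have Txyz : c + 2*(d*e*f) + 2*(a*b*m) - m*e*p - m*d*q - b*f*p - b*d*r - a*f*q - a*e*r = 0 := by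
    have h' : (3:k) * (c + 2*(d*e*f) + 2*(a*b*m) - m*e*p - m*d*q - b*f*p - b*d*r - a*f*q - a*e*r) = 0 := by
      linear_combination hP 1 1 1 - hP 1 1 0 - hP 1 0 1 - hP 0 1 1 + hP 1 0 0 + hP 0 1 0 + hP 0 0 1
    exact (mul_eq_zero.mp h').resolve_left h3
  have hv0 : m^2 - f*r = 0 := by
    have h' : (m^2 - f*r) * (a*(e*r-f*q) - b*(d*r-f*p) + m*(d*q-e*p)) = 0 := by
      linear_combination (e*r-f*q)*Txz2 - (d*r-f*p)*Tyz2 + (d*q-e*p)*hz3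
    exact (mul_eq_zero.mp h').resolve_right hD
  have hv1 : f^2 - m*r = 0 := by
    have h' : (f^2 - m*r) * (a*(e*r-f*q) - b*(d*r-f*p) + m*(d*q-e*p)) = 0 := by
      linear_combination (-(b*r-m*q))*Txz2 + (a*r-m*p)*Tyz2 - (a*q-b*p)*hz3
    exact (mul_eq_zero.mp h').resolve_right hD
  have hv2 : m*f = 0 := by
    have h' : (m*f) * (a*(e*r-f*q) - b*(d*r-f*p) + m*(d*q-e*p)) = 0 := by
      linear_combination (-(b*f-m*e))*Txz2 + (a*f-m*d)*Tyz2 - (a*e-b*d)*hz3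
    exact (mul_eq_zero.mp h').resolve_right hD
  obtain ⟨hm, hf⟩ : m = 0 ∧ f = 0 := by
    rcases mul_eq_zero.mp hv2 with h0 | h0
    · refine ⟨h0, ?_⟩
      have : f^2 = 0 := by linear_combination hv1 + r*h0
      exact pow_eq_zero_iff (n := 2) (by norm_num) |>.mp this
    · refine ⟨?_, h0⟩
      have : m^2 = 0 := by linear_combination hv0 + r*h0
      exact pow_eq_zero_iff (n := 2) (by norm_num) |>.mp this
  subst hm; subst hf
  have hr : r ≠ 0 := by
    intro h0; apply hD; rw [h0]; ring
  have hae : a*e - b*d ≠ 0 := by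
    intro h0; apply hD; linear_combination r*h0
  have had : a*d = 0 := by
    have h' : (a*d)*r = 0 := by linear_combination -Tx2z
    exact (mul_eq_zero.mp h').resolve_right hr
  rcases mul_eq_zero.mp had with ha0 | hd0
  · subst ha0
    have hb : b ≠ 0 := by intro h0; apply hae; rw [h0]; ring
    have hd : d ≠ 0 := by intro h0; apply hae; rw [h0]; ring
    have he0 : e = 0 := by
      have h' : e*(b*r) = 0 := by linear_combination -Ty2z
      exact (mul_eq_zero.mp h').resolve_right (mul_ne_zero hb hr)
    subst he0
    have hp0 : p = 0 := by
      have h' : p*(b*d) = 0 := by linear_combination -Tx2y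
      exact (mul_eq_zero.mp h').resolve_right (mul_ne_zero hb hd)
    subst hp0
    have hq0 : q = 0 := by
      have h' : q*(b*d) = 0 := by linear_combination -Txy2
      exact (mul_eq_zero.mp h').resolve_right (mul_ne_zero hb hd)
    subst hq0
    have hcval : c = b*d*r := by linear_combination Txyz
    have hd3 : d^3 = c := by linear_combination hx3
    have hb3 : b^3 = c := by linear_combination hy3
    have hb2 : b^2 = d*r := by
      apply mul_left_cancel₀ hb
      linear_combination hb3 + hcval
    refine ⟨d, b*d⁻¹, hd, ?_, Or.inr ⟨rfl, ?_, rfl, rfl, rfl, rfl, rfl, rfl, ?_⟩⟩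
    · field_simp
      linear_combination hb3 - hd3
    · field_simp
    · field_simp
      linear_combination (-1)*hb2
  · subst hd0
    have ha : a ≠ 0 := by intro h0; apply hae; rw [h0]; ring
    have he : e ≠ 0 := by intro h0; apply hae; rw [h0]; ring
    have hb0 : b = 0 := by
      have h' : b*(e*r) = 0 := by linear_combination -Ty2z
      exact (mul_eq_zero.mp h').resolve_right (mul_ne_zero he hr)
    subst hb0
    have hp0 : p = 0 := by
      have h' : p*(a*e) = 0 := by linear_combination -Tx2y
      exact (mul_eq_zero.mp h').resolve_right (mul_ne_zero ha he)
    subst hp0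
    have hq0 : q = 0 := by
      have h' : q*(a*e) = 0 := by linear_combination -Txy2
      exact (mul_eq_zero.mp h').resolve_right (mul_ne_zero ha he)
    subst hq0
    have hcval : c = a*e*r := by linear_combination Txyz
    have ha3 : a^3 = c := by linear_combination hx3
    have he3 : e^3 = c := by linear_combination hy3
    have he2 : e^2 = a*r := by
      apply mul_left_cancel₀ he
      linear_combination he3 + hcval
    refine ⟨a, e*a⁻¹, ha, ?_, Or.inl ⟨rfl, rfl, rfl, rfl, ?_, rfl, rfl, rfl, ?_⟩⟩
    · field_simp
      linear_combination he3 - ha3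
    · field_simp
    · field_simp
      linear_combination (-1)*he2

end lemmas

lemma smul_diag3 {k : Type*} [Field k] (s ω : k) :
    s • Matrix.diagonal ![(1:k),ω,ω^2] = !![s,0,0;0,s*ω,0;0,0,s*ω^2] := by
  ext i j
  fin_cases i <;> fin_cases j <;>
    simp [Matrix.diagonal_apply, Matrix.vecHead, Matrix.vecTail]

lemma smul_swapdiag3 {k : Type*} [Field k] (s ω : k) :
    s • ((!![0,1,0;1,0,0;0,0,1] : Matrix (Fin 3) (Fin 3) k) * Matrix.diagonal ![(1:k),ω,ω^2])
      = !![0,s*ω,0;s,0,0;0,0,s*ω^2] := by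
  rw [g2D]
  ext i j
  fin_cases i <;> fin_cases j <;>
    simp [Matrix.vecHead, Matrix.vecTail]

section test
variable {k : Type*} [Field k]

lemma mem1 (ζ : k) : Matrix.diagonal ![1, ζ^2, ζ] ∈ Submonoid.closure
    ({Matrix.diagonal ![1, ζ^2, ζ], !![0,1,0;1,0,0;0,0,1]} : Set (Matrix (Fin 3) (Fin 3) k)) :=
  Submonoid.subset_closure (Or.inl rfl)

lemma mem2 (ζ : k) : (!![0,1,0;1,0,0;0,0,1] : Matrix (Fin 3) (Fin 3) k) ∈ Submonoid.closure
    ({Matrix.diagonal ![1, ζ^2, ζ], !![0,1,0;1,0,0;0,0,1]} : Set (Matrix (Fin 3) (Fin 3) k)) :=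
  Submonoid.subset_closure (Or.inr rfl)

def StabM (k : Type*) [Field k] : Submonoid (Matrix (Fin 3) (Fin 3) k) where
  carrier := {x | Stab x}
  one_mem' := stab_one
  mul_mem' := fun h1 h2 => stab_mul h1 h2

lemma closure_stab (ζ : k) (hζ3 : ζ^3 = 1) :
    ∀ x ∈ Submonoid.closure
      ({Matrix.diagonal ![1, ζ^2, ζ], !![0,1,0;1,0,0;0,0,1]} : Set (Matrix (Fin 3) (Fin 3) k)),
      Stab x := by
  intro x hx
  have hle : Submonoid.closure
      ({Matrix.diagonal ![1, ζ^2, ζ], !![0,1,0;1,0,0;0,0,1]} : Set (Matrix (Fin 3) (Fin 3) k))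
      ≤ StabM k := by
    rw [Submonoid.closure_le]
    intro y hy
    rcases hy with h | h
    · rw [h]; exact stab_g1 hζ3
    · rw [h]; exact stab_g2
  exact hle hx

end test

set_option maxHeartbeats 1000000 in
/-- The stabilizer in PGL(3,k) of the nodal cubic C : x₀³ + x₁³ - 3x₀x₁x₂ = 0 is
generated by g₁ = Diag(1, ζ₃², ζ₃) and g₂ = the swap of x₀ and x₁: an invertible
matrix g preserves C (i.e. F ∘ g = c·F up to a nonzero scalar c) iff, up to a
nonzero scalar, g lies in the (finite) submonoid = subgroup generated by g₁, g₂.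
In particular the stabilizer is finite (modulo scalars it is given by a finite
set of matrices). -/
theorem stmt11 {k : Type*} [Field k] [IsAlgClosed k]
    (h2 : (2 : k) ≠ 0) (h3 : (3 : k) ≠ 0)
    (ζ : k) (hζ : IsPrimitiveRoot ζ 3) :
    (∀ g : Matrix (Fin 3) (Fin 3) k, IsUnit g →
      ((∃ c : k, c ≠ 0 ∧
          aeval (R := k) (fun i => ∑ j, C (g i j) * X j)
            (X 0 ^ 3 + X 1 ^ 3 - 3 * (X 0 * X 1 * X 2) : MvPolynomial (Fin 3) k)
          = c • (X 0 ^ 3 + X 1 ^ 3 - 3 * (X 0 * X 1 * X 2) : MvPolynomial (Fin 3) k))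
        ↔ ∃ c : k, c ≠ 0 ∧ c • g ∈ Submonoid.closure
            ({Matrix.diagonal ![1, ζ ^ 2, ζ], !![0,1,0;1,0,0;0,0,1]} :
              Set (Matrix (Fin 3) (Fin 3) k)))) ∧
    (∃ T : Finset (Matrix (Fin 3) (Fin 3) k),
      ∀ g : Matrix (Fin 3) (Fin 3) k, IsUnit g →
        ((∃ c : k, c ≠ 0 ∧
            aeval (R := k) (fun i => ∑ j, C (g i j) * X j)
              (X 0 ^ 3 + X 1 ^ 3 - 3 * (X 0 * X 1 * X 2) : MvPolynomial (Fin 3) k)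
            = c • (X 0 ^ 3 + X 1 ^ 3 - 3 * (X 0 * X 1 * X 2) : MvPolynomial (Fin 3) k))
          ↔ ∃ N ∈ T, ∃ c : k, c ≠ 0 ∧ g = c • N)) := by
  classical
  have hζ3 : ζ ^ 3 = 1 := hζ.pow_eq_one
  have hζne1 : ζ ≠ 1 := hζ.ne_one (by norm_num)
  have hsum : 1 + ζ + ζ^2 = 0 := by
    have h' : (ζ - 1) * (1 + ζ + ζ^2) = 0 := by linear_combination hζ3
    exact (mul_eq_zero.mp h').resolve_left (sub_ne_zero.mpr hζne1)
  have hg1mem := mem1 ζ (k := k)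
  have hg2mem := mem2 ζ (k := k)
  have hclos := closure_stab ζ hζ3 (k := k)
  have key : ∀ g : Matrix (Fin 3) (Fin 3) k, IsUnit g → Stab g →
      ∃ s : k, s ≠ 0 ∧ (g = s • (1 : Matrix (Fin 3) (Fin 3) k) ∨ g = s • (Matrix.diagonal ![1, ζ^2, ζ]*Matrix.diagonal ![1, ζ^2, ζ]) ∨ g = s • Matrix.diagonal ![1, ζ^2, ζ]
        ∨ g = s • !![0,1,0;1,0,0;0,0,1] ∨ g = s • (!![0,1,0;1,0,0;0,0,1]*(Matrix.diagonal ![1, ζ^2, ζ]*Matrix.diagonal ![1, ζ^2, ζ])) ∨ g = s • (!![0,1,0;1,0,0;0,0,1]*Matrix.diagonal ![1, ζ^2, ζ])) := by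
    intro g hg hstab
    obtain ⟨c, hc, h⟩ := hstab
    have hP := to_eval h
    have hdet : g.det ≠ 0 := ((Matrix.isUnit_iff_isUnit_det g).mp hg).ne_zero
    have hD : g 0 0*(g 1 1*g 2 2-g 1 2*g 2 1) - g 0 1*(g 1 0*g 2 2-g 1 2*g 2 0)
        + g 0 2*(g 1 0*g 2 1-g 1 1*g 2 0) ≠ 0 := by
      intro h0; apply hdet; rw [Matrix.det_fin_three]; linear_combination h0
    obtain ⟨s, ω, hs, hω3, hcase⟩ := classify_core h2 h3 (g 0 0) (g 0 1) (g 0 2) (g 1 0)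
      (g 1 1) (g 1 2) (g 2 0) (g 2 1) (g 2 2) c hD hP
    have htri : ω = 1 ∨ ω = ζ ∨ ω = ζ^2 := by
      have hfac : (ω - 1)*((ω - ζ)*(ω - ζ^2)) = 0 := by
        linear_combination hω3 + (ω - ω^2) * hsum + (ω - 1) * hζ3
      rcases mul_eq_zero.mp hfac with h0 | h0
      · exact Or.inl (sub_eq_zero.mp h0)
      · rcases mul_eq_zero.mp h0 with h0 | h0
        · exact Or.inr (Or.inl (sub_eq_zero.mp h0))
        · exact Or.inr (Or.inr (sub_eq_zero.mp h0))
    refine ⟨s, hs, ?_⟩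
    rcases hcase with ⟨e1,e2,e3,e4,e5,e6,e7,e8,e9⟩ | ⟨e1,e2,e3,e4,e5,e6,e7,e8,e9⟩
    · have hgm : g = s • Matrix.diagonal ![(1:k),ω,ω^2] := by
        rw [smul_diag3, Matrix.eta_fin_three g, e1, e2, e3, e4, e5, e6, e7, e8, e9]
      rcases htri with hω | hω | hω
      · rw [hω] at hgm; rw [D_one] at hgm
        exact Or.inl hgm
      · rw [hω] at hgm; rw [D_zeta hζ3] at hgm
        exact Or.inr (Or.inl hgm)
      · rw [hω] at hgm; rw [D_zetasq hζ3] at hgm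
        exact Or.inr (Or.inr (Or.inl hgm))
    · have hgm : g = s • (!![0,1,0;1,0,0;0,0,1] * Matrix.diagonal ![(1:k),ω,ω^2]) := by
        rw [smul_swapdiag3, Matrix.eta_fin_three g, e1, e2, e3, e4, e5, e6, e7, e8, e9]
      rcases htri with hω | hω | hω
      · rw [hω] at hgm; rw [D_one, mul_one] at hgm
        exact Or.inr (Or.inr (Or.inr (Or.inl hgm)))
      · rw [hω] at hgm; rw [D_zeta hζ3] at hgm
        exact Or.inr (Or.inr (Or.inr (Or.inr (Or.inl hgm))))
      · rw [hω] at hgm; rw [D_zetasq hζ3] at hgm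
        exact Or.inr (Or.inr (Or.inr (Or.inr (Or.inr hgm))))
  constructor
  · intro g hg
    constructor
    · intro hstab
      obtain ⟨s, hs, hcases⟩ := key g hg hstab
      refine ⟨s⁻¹, inv_ne_zero hs, ?_⟩
      have hsm : ∀ N : Matrix (Fin 3) (Fin 3) k, g = s • N → s⁻¹ • g = N := by
        intro N hN; rw [hN, smul_smul, inv_mul_cancel₀ hs, one_smul]
      rcases hcases with h|h|h|h|h|h <;> rw [hsm _ h]
      exacts [Submonoid.one_mem _, mul_mem hg1mem hg1mem, hg1mem, hg2mem,
        mul_mem hg2mem (mul_mem hg1mem hg1mem), mul_mem hg2mem hg1mem]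
    · rintro ⟨c, hc, hmem⟩
      exact stab_of_smul hc (hclos _ hmem)
  · refine ⟨{(1 : Matrix (Fin 3) (Fin 3) k), Matrix.diagonal ![1, ζ^2, ζ]*Matrix.diagonal ![1, ζ^2, ζ], Matrix.diagonal ![1, ζ^2, ζ], !![0,1,0;1,0,0;0,0,1], !![0,1,0;1,0,0;0,0,1]*(Matrix.diagonal ![1, ζ^2, ζ]*Matrix.diagonal ![1, ζ^2, ζ]), !![0,1,0;1,0,0;0,0,1]*Matrix.diagonal ![1, ζ^2, ζ]}, ?_⟩
    intro g hg
    constructor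
    · intro hstab
      obtain ⟨s, hs, hcases⟩ := key g hg hstab
      rcases hcases with h|h|h|h|h|h
      · exact ⟨1, by simp, s, hs, h⟩
      · exact ⟨Matrix.diagonal ![1, ζ^2, ζ]*Matrix.diagonal ![1, ζ^2, ζ], by simp, s, hs, h⟩
      · exact ⟨Matrix.diagonal ![1, ζ^2, ζ], by simp, s, hs, h⟩
      · exact ⟨!![0,1,0;1,0,0;0,0,1], by simp, s, hs, h⟩
      · exact ⟨!![0,1,0;1,0,0;0,0,1]*(Matrix.diagonal ![1, ζ^2, ζ]*Matrix.diagonal ![1, ζ^2, ζ]), by simp, s, hs, h⟩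
      · exact ⟨!![0,1,0;1,0,0;0,0,1]*Matrix.diagonal ![1, ζ^2, ζ], by simp, s, hs, h⟩
    · rintro ⟨N, hN, c, hc, rfl⟩
      have hNstab : Stab N := by
        simp only [Finset.mem_insert, Finset.mem_singleton] at hN
        rcases hN with rfl|rfl|rfl|rfl|rfl|rfl
        · exact stab_one
        · exact stab_mul (stab_g1 hζ3) (stab_g1 hζ3)
        · exact stab_g1 hζ3
        · exact stab_g2
        · exact stab_mul stab_g2 (stab_mul (stab_g1 hζ3) (stab_g1 hζ3))
        · exact stab_mul stab_g2 (stab_g1 hζ3)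
      exact stab_smul hc hNstab
end

section
/- Let k be algebraically closed with char k ≠ 2, 3. For the pair (C, L) with C = V(x₀x₁x₂) (a triangle) and L = V(x₀ + x₁ + x₂), the stabilizer of (C, L) in PGL(3, k) is exactly the group of coordinate permutations of x₀, x₁, x₂, isomorphic to the symmetric group S₃. -/
open MvPolynomial

section aux
variable {k : Type*} [Field k]

private lemma coeff_aux12 (a : Fin 3 → k) (j j' : Fin 3) (h : j' ≠ j)
    (h0 : (∑ m, C (a m) * (if m = j then 0 else X m) : MvPolynomial (Fin 3) k) = 0) :
    a j' = 0 := by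
  have := congrArg (coeff (Finsupp.single j' 1)) h0
  simp only [Fin.sum_univ_three, coeff_add, coeff_zero, MvPolynomial.coeff_C_mul,
    apply_ite (coeff (Finsupp.single j' 1)), MvPolynomial.coeff_X', coeff_zero] at this
  fin_cases j <;> fin_cases j' <;> simp_all [Finsupp.single_eq_single_iff]

private lemma coeff_aux12' (a : Fin 3 → k) (d : k) (j' : Fin 3)
    (h0 : (∑ m, C (a m) * X m : MvPolynomial (Fin 3) k)
      = C d * (X 0 + X 1 + X 2)) : a j' = d := by
  have := congrArg (coeff (Finsupp.single j' 1)) h0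
  simp only [Fin.sum_univ_three, coeff_add, mul_add, MvPolynomial.coeff_C_mul,
    MvPolynomial.coeff_X'] at this
  fin_cases j' <;> simp_all [Finsupp.single_eq_single_iff]

end aux

/-- The stabilizer in PGL(3,k) of the pair (C, L) with C = V(x₀x₁x₂) (a 3-gon)
and L = V(x₀ + x₁ + x₂) is exactly the group of coordinate permutations of
x₀, x₁, x₂ (isomorphic to S₃): an invertible matrix g preserves both C and L
(each up to a nonzero scalar) iff g is, up to a nonzero scalar, a permutation
matrix. -/
theorem stmt12 {k : Type*} [Field k] [IsAlgClosed k]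
    (h2 : (2 : k) ≠ 0) (h3 : (3 : k) ≠ 0)
    (g : Matrix (Fin 3) (Fin 3) k) (hg : IsUnit g) :
    ((∃ c : k, c ≠ 0 ∧
        aeval (R := k) (fun i => ∑ j, C (g i j) * X j)
          (X 0 * X 1 * X 2 : MvPolynomial (Fin 3) k)
        = c • (X 0 * X 1 * X 2 : MvPolynomial (Fin 3) k)) ∧
     (∃ d : k, d ≠ 0 ∧
        aeval (R := k) (fun i => ∑ j, C (g i j) * X j)
          (X 0 + X 1 + X 2 : MvPolynomial (Fin 3) k)
        = d • (X 0 + X 1 + X 2 : MvPolynomial (Fin 3) k)))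
    ↔ ∃ (c : k) (σ : Equiv.Perm (Fin 3)), c ≠ 0 ∧
        g = c • Matrix.of (fun i j => if σ i = j then (1 : k) else 0) := by
  set L : Fin 3 → MvPolynomial (Fin 3) k := fun i => ∑ j, C (g i j) * X j with hL
  constructor
  · rintro ⟨⟨c, hc, hC⟩, ⟨d, hd, hD⟩⟩
    rw [show aeval (R := k) L (X 0 * X 1 * X 2) = L 0 * L 1 * L 2 by simp [hL],
      smul_eq_C_mul] at hC
    rw [show aeval (R := k) L (X 0 + X 1 + X 2) = L 0 + L 1 + L 2 by simp [hL],
      smul_eq_C_mul] at hD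
    -- rows are nonzero
    have rownz : ∀ i, ∃ j, g i j ≠ 0 := by
      intro i
      by_contra h
      push_neg at h
      obtain ⟨u, hu⟩ := hg
      have h1 : (u.val * (↑u⁻¹ : Matrix (Fin 3) (Fin 3) k)) i i = 1 := by
        rw [u.mul_inv]; simp
      rw [Matrix.mul_apply] at h1
      simp [hu, h] at h1
    -- for each column j there is a row whose only possibly-nonzero entry is column j
    have key : ∀ j : Fin 3, ∃ i : Fin 3, ∀ j' ≠ j, g i j' = 0 := by
      intro j
      set φ : MvPolynomial (Fin 3) k →ₐ[k] MvPolynomial (Fin 3) k :=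
        aeval (fun m => if m = j then 0 else X m) with hφ
      have hz : φ (L 0) * φ (L 1) * φ (L 2) = 0 := by
        have h' := congrArg φ hC
        simp only [map_mul, hφ, aeval_X] at h'
        show (aeval fun m => if m = j then 0 else X m) (L 0) *
          (aeval fun m => if m = j then 0 else X m) (L 1) *
          (aeval fun m => if m = j then 0 else X m) (L 2) = 0
        rw [h']
        fin_cases j <;> simp
      have : φ (L 0) = 0 ∨ φ (L 1) = 0 ∨ φ (L 2) = 0 := by
        rcases mul_eq_zero.mp hz with h | h
        · rcases mul_eq_zero.mp h with h | h
          · exact Or.inl h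
          · exact Or.inr (Or.inl h)
        · exact Or.inr (Or.inr h)
      have hLφ : ∀ i, φ (L i) = ∑ m, C (g i m) * (if m = j then 0 else X m) := by
        intro i
        simp [hL, hφ, map_sum]
      rcases this with h | h | h
      · exact ⟨0, fun j' hj' => coeff_aux12 _ j j' hj' (by rw [← hLφ 0, h])⟩
      · exact ⟨1, fun j' hj' => coeff_aux12 _ j j' hj' (by rw [← hLφ 1, h])⟩
      · exact ⟨2, fun j' hj' => coeff_aux12 _ j j' hj' (by rw [← hLφ 2, h])⟩
    choose f hf using key
    have finj : Function.Injective f := by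
      intro j₁ j₂ hj
      by_contra hne
      obtain ⟨j0, hj0⟩ := rownz (f j₁)
      rcases eq_or_ne j0 j₁ with rfl | h1
      · exact hj0 (by rw [hj]; exact hf j₂ j0 hne)
      · exact hj0 (hf j₁ j0 h1)
    let e : Equiv.Perm (Fin 3) := Equiv.ofBijective f finj.bijective_of_finite
    set σ : Equiv.Perm (Fin 3) := e.symm with hσ
    have hrow : ∀ i j', j' ≠ σ i → g i j' = 0 := by
      intro i j' hj'
      have : f (σ i) = i := e.apply_symm_apply i
      rw [← this]
      exact hf (σ i) j' hj'
    -- each L i = C (g i (σ i)) * X (σ i)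
    have hLi : ∀ i, L i = C (g i (σ i)) * X (σ i) := by
      intro i
      show (∑ j, C (g i j) * X j : MvPolynomial (Fin 3) k) = _
      exact Finset.sum_eq_single (σ i) (fun b _ hb => by rw [hrow i b hb]; simp)
        (fun h => absurd (Finset.mem_univ _) h)
    -- use the line condition
    have hsum : (∑ m, C ((fun i => g (σ.symm i) (i)) m) * X m : MvPolynomial (Fin 3) k)
        = C d * (X 0 + X 1 + X 2) := by
      rw [← hD]
      rw [hLi 0, hLi 1, hLi 2]
      rw [show (∑ m, C (g (σ.symm m) m) * X m : MvPolynomial (Fin 3) k)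
          = ∑ m, C (g (σ.symm (σ m)) (σ m)) * X (σ m) from
        (Equiv.sum_comp σ fun m => C (g (σ.symm m) m) * X m).symm]
      simp [Fin.sum_univ_three]
    have hall : ∀ j', g (σ.symm j') j' = d :=
      fun j' => coeff_aux12' (fun i => g (σ.symm i) i) d j' hsum
    refine ⟨d, σ, hd, ?_⟩
    ext i j
    rcases eq_or_ne j (σ i) with rfl | hne
    · have := hall (σ i)
      rw [Equiv.symm_apply_apply] at this
      simp [Matrix.smul_apply, this]
    · rw [hrow i j hne]
      simp [Matrix.smul_apply, (by simpa [eq_comm] using hne : ¬ σ i = j)]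
  · rintro ⟨c, σ, hc, rfl⟩
    have hLi : ∀ i, L i = C c * X (σ i) := by
      intro i
      show (∑ j, C ((c • Matrix.of fun i j => if σ i = j then (1:k) else 0) i j) * X j
        : MvPolynomial (Fin 3) k) = _
      refine (Finset.sum_eq_single (σ i) ?_ ?_).trans ?_
      · intro b _ hb
        simp [Matrix.smul_apply, (by simpa [eq_comm] using hb : ¬ σ i = b)]
      · intro h; exact absurd (Finset.mem_univ _) h
      · simp [Matrix.smul_apply]
    constructor
    · refine ⟨c ^ 3, pow_ne_zero _ hc, ?_⟩
      rw [show aeval (R := k) L (X 0 * X 1 * X 2) = L 0 * L 1 * L 2 by simp [hL],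
        smul_eq_C_mul, hLi 0, hLi 1, hLi 2]
      have : (X (σ 0) * X (σ 1) * X (σ 2) : MvPolynomial (Fin 3) k) = X 0 * X 1 * X 2 := by
        have := Equiv.prod_comp σ (fun m => (X m : MvPolynomial (Fin 3) k))
        rw [Fin.prod_univ_three, Fin.prod_univ_three] at this
        exact this
      rw [show (C c * X (σ 0)) * (C c * X (σ 1)) * (C c * X (σ 2))
          = C c * C c * C c * (X (σ 0) * X (σ 1) * X (σ 2)) by ring, this]
      rw [← map_mul, ← map_mul, pow_three, mul_assoc]
    · refine ⟨c, hc, ?_⟩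
      rw [show aeval (R := k) L (X 0 + X 1 + X 2) = L 0 + L 1 + L 2 by simp [hL],
        smul_eq_C_mul, hLi 0, hLi 1, hLi 2]
      have : (X (σ 0) + X (σ 1) + X (σ 2) : MvPolynomial (Fin 3) k) = X 0 + X 1 + X 2 := by
        have := Equiv.sum_comp σ (fun m => (X m : MvPolynomial (Fin 3) k))
        rw [Fin.sum_univ_three, Fin.sum_univ_three] at this
        exact this
      rw [← this]
      ring
end

section
/- Let k be algebraically closed with char k ≠ 2, 3, and let μ ∈ k with μ ≠ 1. Under the substitution xᵢ rescaling (x₀ ↦ ((μ+2)/(μ−1))·x₀ appropriately), the pair z(μ) = (V(x₀³ + x₁³ + x₂³ − 3μx₀x₁x₂), V(μx₀ + x₁ + x₂)) is PGL(3)-equivalent to the pair (V(((μ−1)/(μ+2))³x₀³ + x₁³ + x₂³ − 3x₀x₁x₂), V(x₀ + x₁ + x₂)), whenever μ ≠ −2; consequently, as μ → 1, z(μ) converges in the space of (cubic, line) pairs to (V(x₁³ + x₂³ − 3x₀x₁x₂), V(x₀ + x₁ + x₂)). -/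
open MvPolynomial

set_option maxHeartbeats 2000000 in
/-- For μ ≠ 1 (and μ + 2 ≠ 0), the pair
z(μ) = (V(x₀³ + x₁³ + x₂³ - 3μx₀x₁x₂), V(μx₀ + x₁ + x₂)) is PGL(3)-equivalent,
up to nonzero scalars on the defining equations, to the pair
(V(((μ-1)/(μ+2))³x₀³ + x₁³ + x₂³ - 3x₀x₁x₂), V(x₀ + x₁ + x₂)); consequently, as
μ → 1 (i.e. as ν = (μ-1)/(μ+2) → 0) the family ν ↦ (ν³x₀³ + x₁³ + x₂³ - 3x₀x₁x₂,
x₀ + x₁ + x₂) converges to the pair (V(x₁³ + x₂³ - 3x₀x₁x₂), V(x₀ + x₁ + x₂)). -/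
theorem stmt14 {k : Type*} [Field k] [IsAlgClosed k]
    (h2 : (2 : k) ≠ 0) (h3 : (3 : k) ≠ 0) :
    (∀ μ : k, μ ≠ 1 → μ + 2 ≠ 0 →
      ∃ g : Matrix (Fin 3) (Fin 3) k, IsUnit g ∧ ∃ c d : k, c ≠ 0 ∧ d ≠ 0 ∧
        aeval (R := k) (fun i => ∑ j, C (g i j) * X j)
            (X 0 ^ 3 + X 1 ^ 3 + X 2 ^ 3 - C (3 * μ) * (X 0 * X 1 * X 2) :
              MvPolynomial (Fin 3) k)
          = c • (C (((μ - 1) / (μ + 2)) ^ 3) * X 0 ^ 3 + X 1 ^ 3 + X 2 ^ 3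
              - C 3 * (X 0 * X 1 * X 2) : MvPolynomial (Fin 3) k) ∧
        aeval (R := k) (fun i => ∑ j, C (g i j) * X j)
            (C μ * X 0 + X 1 + X 2 : MvPolynomial (Fin 3) k)
          = d • (X 0 + X 1 + X 2 : MvPolynomial (Fin 3) k)) ∧
    (fun ν : k => C (ν ^ 3) * X 0 ^ 3 + X 1 ^ 3 + X 2 ^ 3 - C 3 * (X 0 * X 1 * X 2) :
        k → MvPolynomial (Fin 3) k) ((1 - 1) / (1 + 2))
      = X 1 ^ 3 + X 2 ^ 3 - C 3 * (X 0 * X 1 * X 2) := by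
  constructor
  · intro μ hμ1 hμ2
    -- get a primitive cube root of unity
    obtain ⟨ω, hω⟩ : ∃ ω : k, ω ^ 2 + ω + 1 = 0 := by
      have hd : (Polynomial.X ^ 2 + Polynomial.X + 1 : Polynomial k).degree = 2 := by
        have := Polynomial.degree_quadratic (one_ne_zero : (1 : k) ≠ 0) (b := 1) (c := 1)
        simpa using this
      obtain ⟨ω, hω⟩ := IsAlgClosed.exists_root
        (Polynomial.X ^ 2 + Polynomial.X + 1 : Polynomial k) (by rw [hd]; decide)
      exact ⟨ω, by simpa [Polynomial.IsRoot] using hω⟩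
    set ν := (μ - 1) / (μ + 2) with hν
    have hrel : ν * (μ + 2) = μ - 1 := by rw [hν]; exact div_mul_cancel₀ _ hμ2
    have hν0 : ν ≠ 0 := div_ne_zero (sub_ne_zero.mpr hμ1) hμ2
    have hω0 : ω ≠ 0 := by intro h; rw [h] at hω; simpa using hω
    have hω1 : ω ≠ 1 := by
      intro h; rw [h] at hω; apply h3; linear_combination hω
    refine ⟨!![ν, 1, 1; ν, ω ^ 2, ω; ν, ω, ω ^ 2], ?_, 3 * (1 - μ), μ - 1,
      mul_ne_zero h3 (sub_ne_zero.mpr (Ne.symm hμ1)), sub_ne_zero.mpr hμ1, ?_, ?_⟩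
    · rw [Matrix.isUnit_iff_isUnit_det, isUnit_iff_ne_zero]
      have hdet : (!![ν, 1, 1; ν, ω ^ 2, ω; ν, ω, ω ^ 2] : Matrix (Fin 3) (Fin 3) k).det
          = 3 * ν * (ω - ω ^ 2) := by
        rw [Matrix.det_fin_three]
        simp only [Matrix.cons_val', Matrix.cons_val_zero, Matrix.cons_val_one, Matrix.head_cons,
          Matrix.empty_val', Matrix.cons_val_fin_one, Matrix.head_fin_const, Matrix.cons_val_two,
          Matrix.tail_cons, Matrix.of_apply, Fin.isValue]
        linear_combination (ν * ω ^ 2 - ν * ω) * hω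
      rw [hdet]
      refine mul_ne_zero (mul_ne_zero h3 hν0) ?_
      intro h
      apply mul_ne_zero hω0 (sub_ne_zero.mpr (Ne.symm hω1))
      linear_combination h
    · apply MvPolynomial.funext
      intro x
      simp only [map_add, map_sub, map_mul, map_pow, aeval_X, aeval_C, Fin.sum_univ_three,
        MvPolynomial.algebraMap_eq, eval_add, eval_sub, eval_mul, eval_pow, eval_X, eval_C,
        smul_eq_C_mul]
      simp only [Matrix.cons_val', Matrix.cons_val_zero, Matrix.cons_val_one, Matrix.head_cons,
        Matrix.empty_val', Matrix.cons_val_fin_one, Matrix.head_fin_const, Matrix.cons_val_two,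
        Matrix.tail_cons, Matrix.of_apply, Fin.isValue]
      linear_combination ((-2)*(x 2)^3 + (2)*(x 2)^3*ω + (-1)*(x 2)^3*ω^3 + (x 2)^3*ω^4 +
        (3)*(x 2)^3*μ + (-3)*(x 2)^3*μ*ω + (3)*(x 1)*(x 2)^2 + (-3)*(x 1)*(x 2)^2*ω +
        (3)*(x 1)*(x 2)^2*ω^3 + (-3)*(x 1)*(x 2)^2*μ*ω^2 + (3)*(x 1)^2*(x 2) +
        (-3)*(x 1)^2*(x 2)*ω + (3)*(x 1)^2*(x 2)*ω^3 + (-3)*(x 1)^2*(x 2)*μ*ω^2 + (-2)*(x 1)^3 +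
        (2)*(x 1)^3*ω + (-1)*(x 1)^3*ω^3 + (x 1)^3*ω^4 + (3)*(x 1)^3*μ + (-3)*(x 1)^3*μ*ω +
        (3)*(x 0)*(x 2)^2*ν + (-3)*(x 0)*(x 2)^2*ν*ω + (3)*(x 0)*(x 2)^2*ν*ω^2 +
        (-3)*(x 0)*(x 2)^2*μ*ν*ω + (-12)*(x 0)*(x 1)*(x 2)*ν + (12)*(x 0)*(x 1)*(x 2)*ν*ω +
        (-9)*(x 0)*(x 1)*(x 2)*μ*ν + (3)*(x 0)*(x 1)*(x 2)*μ*ν*ω + (-3)*(x 0)*(x 1)*(x 2)*μ*ν*ω^2 +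
        (3)*(x 0)*(x 1)^2*ν + (-3)*(x 0)*(x 1)^2*ν*ω + (3)*(x 0)*(x 1)^2*ν*ω^2 +
        (-3)*(x 0)*(x 1)^2*μ*ν*ω + (3)*(x 0)^2*(x 2)*ν^2 + (-3)*(x 0)^2*(x 2)*μ*ν^2 +
        (3)*(x 0)^2*(x 1)*ν^2 + (-3)*(x 0)^2*(x 1)*μ*ν^2) * hω + (9 * x 0 * x 1 * x 2) * hrel
    · apply MvPolynomial.funext
      intro x
      simp only [map_add, map_sub, map_mul, map_pow, aeval_X, aeval_C, Fin.sum_univ_three,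
        MvPolynomial.algebraMap_eq, eval_add, eval_sub, eval_mul, eval_pow, eval_X, eval_C,
        smul_eq_C_mul]
      simp only [Matrix.cons_val', Matrix.cons_val_zero, Matrix.cons_val_one, Matrix.head_cons,
        Matrix.empty_val', Matrix.cons_val_fin_one, Matrix.head_fin_const, Matrix.cons_val_two,
        Matrix.tail_cons, Matrix.of_apply, Fin.isValue]
      linear_combination (x 0) * hrel + (x 1 + x 2) * hω
  · norm_num
end
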